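/- If $\phi = \sum_{i=0}^{M} \phi_i T_i$ is a real polynomial expanded in Chebyshev polynomials of the first kind, then its fourth derivative has Chebyshev expansion $\phi'''' = \sum_{i=0}^{M} \phi_i^{(4)} T_i$ with $\phi_i^{(4)} = \tfrac{1}{24 b_i} \sum_{p = i+4,\ p \equiv i\ (\mathrm{mod}\ 2)}^{M} p\big(p^2(p^2-4)^2 - 3p^4 i^2 + 3 p^2 i^4 - i^2(i^2-4)^2\big)\phi_p$, where $b_0 = 2$ and $b_i = 1$ for $i \ge 1$. -/

import Mathlib

open Polynomial Polynomial.Chebyshev Finset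

/-- `b₀ = 2`, `bᵢ = 1` for `i ≥ 1`. -/
noncomputable def bcoef (i : ℕ) : ℝ := if i = 0 then 2 else 1

set_option linter.unreachableTactic false
set_option linter.unusedTactic false

noncomputable def g1 (i p : ℕ) : ℝ :=
  if i + 1 ≤ p ∧ (p + i) % 2 = 1 then 2 * (p:ℝ) / bcoef i else 0
noncomputable def g2 (i p : ℕ) : ℝ :=
  if i + 2 ≤ p ∧ p % 2 = i % 2 then (p:ℝ) * ((p:ℝ)^2 - (i:ℝ)^2) / bcoef i else 0
noncomputable def g3 (i p : ℕ) : ℝ :=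
  if i + 3 ≤ p ∧ (p + i) % 2 = 1 then
    (p:ℝ) / (4 * bcoef i) * (((p:ℝ)^2-1)^2 - 2*((p:ℝ)^2+1)*(i:ℝ)^2 + (i:ℝ)^4) else 0
noncomputable def g4 (i p : ℕ) : ℝ :=
  if i + 4 ≤ p ∧ p % 2 = i % 2 then
    (p:ℝ) / (24 * bcoef i) * ((p:ℝ)^2*((p:ℝ)^2-4)^2 - 3*(p:ℝ)^4*(i:ℝ)^2
      + 3*(p:ℝ)^2*(i:ℝ)^4 - (i:ℝ)^2*((i:ℝ)^2-4)^2) else 0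

lemma S1 (p i : ℕ) : g1 i (p+2) =
    ((if i = 0 then (0:ℝ) else g1 (i-1) (p+1)) + g1 (i+1) (p+1)
      + (if i = 1 then g1 0 (p+1) else 0)) + (if i = p+1 then 2 else 0) - g1 i p := by
  match i with
  | 0 =>
    simp only [g1, bcoef, reduceIte]
    split_ifs <;> (try push_cast) <;>
      first
      | contradiction | (exfalso; omega) | ring1 | norm_num
      | ((have hp : p = 0 := by omega); subst hp; norm_num)
  | 1 =>
    simp only [g1, bcoef, reduceIte, Nat.sub_self]
    split_ifs <;> (try push_cast) <;>
      first
      | contradiction | (exfalso; omega) | ring1 | norm_num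
      | ((have hp : p = 0 := by omega); subst hp; norm_num)
  | (j+2) =>
    simp only [g1, bcoef, reduceIte, Nat.add_sub_cancel, if_neg (by omega : ¬ j + 2 = 0),
      if_neg (by omega : ¬ j + 2 = 1)]
    split_ifs <;> (try push_cast) <;>
      first
      | contradiction | (exfalso; omega) | ring1 | norm_num
      | ((have hp : p = j + 1 := by omega); subst hp; push_cast; ring1)
lemma S2 (p i : ℕ) : g2 i (p+2) =
    ((if i = 0 then (0:ℝ) else g2 (i-1) (p+1)) + g2 (i+1) (p+1)
      + (if i = 1 then g2 0 (p+1) else 0)) + 4 * g1 i (p+1) - g2 i p := by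
  match i with
  | 0 =>
    simp only [g1, g2, bcoef, reduceIte]
    split_ifs <;> (try push_cast) <;>
      first
      | contradiction | (exfalso; omega) | ring1
      | ((have hp : p = 0 := by omega); subst hp; push_cast; ring1)
  | 1 =>
    simp only [g1, g2, bcoef, reduceIte, Nat.sub_self]
    split_ifs <;> (try push_cast) <;>
      first
      | contradiction | (exfalso; omega) | ring1
      | ((have hp : p = 1 := by omega); subst hp; push_cast; ring1)
  | (j+2) =>
    simp only [g1, g2, bcoef, reduceIte, Nat.add_sub_cancel, if_neg (by omega : ¬ j + 2 = 0),
      if_neg (by omega : ¬ j + 2 = 1)]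
    split_ifs <;> (try push_cast) <;>
      first
      | contradiction | (exfalso; omega) | ring1
      | ((have hp : p = j + 2 := by omega); subst hp; push_cast; ring1)

set_option maxHeartbeats 1000000 in
lemma S3 (p i : ℕ) : g3 i (p+2) =
    ((if i = 0 then (0:ℝ) else g3 (i-1) (p+1)) + g3 (i+1) (p+1)
      + (if i = 1 then g3 0 (p+1) else 0)) + 6 * g2 i (p+1) - g3 i p := by
  match i with
  | 0 =>
    simp only [g2, g3, bcoef, reduceIte]
    split_ifs <;> (try push_cast) <;>
      first
      | contradiction | (exfalso; omega) | ring1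
      | ((have hp : p = 1 := by omega); subst hp; push_cast; ring1)
  | 1 =>
    simp only [g2, g3, bcoef, reduceIte, Nat.sub_self]
    split_ifs <;> (try push_cast) <;>
      first
      | contradiction | (exfalso; omega) | ring1
      | ((have hp : p = 2 := by omega); subst hp; push_cast; ring1)
  | (j+2) =>
    simp only [g2, g3, bcoef, reduceIte, Nat.add_sub_cancel, if_neg (by omega : ¬ j + 2 = 0),
      if_neg (by omega : ¬ j + 2 = 1)]
    split_ifs <;> (try push_cast) <;>
      first
      | contradiction | (exfalso; omega) | ring1
      | ((have hp : p = j + 3 := by omega); subst hp; push_cast; ring1)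

set_option maxHeartbeats 2000000 in
lemma S4 (p i : ℕ) : g4 i (p+2) =
    ((if i = 0 then (0:ℝ) else g4 (i-1) (p+1)) + g4 (i+1) (p+1)
      + (if i = 1 then g4 0 (p+1) else 0)) + 8 * g3 i (p+1) - g4 i p := by
  match i with
  | 0 =>
    simp only [g3, g4, bcoef, reduceIte]
    split_ifs <;> (try push_cast) <;>
      first
      | contradiction | (exfalso; omega) | ring1
      | ((have hp : p = 2 := by omega); subst hp; push_cast; ring1)
  | 1 =>
    simp only [g3, g4, bcoef, reduceIte, Nat.sub_self]
    split_ifs <;> (try push_cast) <;>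
      first
      | contradiction | (exfalso; omega) | ring1
      | ((have hp : p = 3 := by omega); subst hp; push_cast; ring1)
  | (j+2) =>
    simp only [g3, g4, bcoef, reduceIte, Nat.add_sub_cancel, if_neg (by omega : ¬ j + 2 = 0),
      if_neg (by omega : ¬ j + 2 = 1)]
    split_ifs <;> (try push_cast) <;>
      first
      | contradiction | (exfalso; omega) | ring1
      | ((have hp : p = j + 4 := by omega); subst hp; push_cast; ring1)

lemma two_X_mul_T (n : ℤ) : 2 * X * T ℝ n = T ℝ (n+1) + T ℝ (n-1) := by
  have h := T_add_two ℝ (n-1)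
  rw [show n-1+2 = n+1 by ring, show n-1+1 = n by ring] at h
  rw [h]; ring

lemma sum_extend (a : ℕ → ℝ) {n m : ℕ} (h : n ≤ m) (h0 : ∀ j, n ≤ j → j < m → a j = 0) :
    ∑ i ∈ range m, C (a i) * T ℝ i = ∑ i ∈ range n, C (a i) * T ℝ i := by
  refine (Finset.sum_subset (Finset.range_mono h) fun x hx hnx => ?_).symm
  rw [h0 x (by simpa using hnx) (by simpa using hx), C_0, zero_mul]

lemma sum_single (c : ℝ) (j n : ℕ) (h : j < n) :
    (∑ i ∈ range n, C (if i = j then c else 0) * T ℝ i) = C c * T ℝ j := by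
  rw [Finset.sum_eq_single j]
  · simp
  · intro b _ hb; rw [if_neg hb, C_0, zero_mul]
  · intro hj; exact absurd (Finset.mem_range.2 h) hj

lemma sum_shift (a : ℕ → ℝ) (n : ℕ) (h1 : a n = 0) (h2 : a (n+1) = 0) :
    2 * X * ∑ i ∈ range n, C (a i) * T ℝ i =
      ∑ i ∈ range (n+1),
        C ((if i = 0 then 0 else a (i-1)) + a (i+1) + (if i = 1 then a 0 else 0)) * T ℝ i := by
  rcases n with _ | m
  · simp [h2]
  · have lhs_eq : 2 * X * ∑ i ∈ range (m+1), C (a i) * T ℝ i =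
        (∑ i ∈ range (m+1), C (a i) * T ℝ ((i:ℤ)+1))
          + ∑ i ∈ range (m+1), C (a i) * T ℝ ((i:ℤ)-1) := by
      rw [Finset.mul_sum, ← Finset.sum_add_distrib]
      refine Finset.sum_congr rfl fun i _ => ?_
      rw [show 2 * X * (C (a i) * T ℝ i) = C (a i) * (2 * X * T ℝ i) by ring,
        two_X_mul_T, mul_add]
    rw [lhs_eq]
    simp only [C_add, add_mul, Finset.sum_add_distrib]
    have e1 : ∑ i ∈ range (m+2), C (if i = 0 then 0 else a (i-1)) * T ℝ i
        = ∑ i ∈ range (m+1), C (a i) * T ℝ ((i:ℤ)+1) := by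
      rw [Finset.sum_range_succ']
      simp only [if_neg (Nat.succ_ne_zero _), Nat.add_sub_cancel, reduceIte, C_0, zero_mul,
        add_zero]
      refine Finset.sum_congr rfl fun i _ => ?_
      push_cast; ring_nf
    have e3 : ∑ i ∈ range (m+2), C (if i = 1 then a 0 else 0) * T ℝ i
        = C (a 0) * T ℝ 1 := sum_single (a 0) 1 (m+2) (by omega)
    have e2 : ∑ i ∈ range (m+2), C (a (i+1)) * T ℝ i
        = ∑ i ∈ range m, C (a (i+1)) * T ℝ i := by
      refine sum_extend (fun i => a (i+1)) (by omega) fun j hj hj2 => ?_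
      rcases (by omega : j = m ∨ j = m+1) with h | h <;> subst h
      · exact h1
      · exact h2
    have down : ∑ i ∈ range (m+1), C (a i) * T ℝ ((i:ℤ)-1)
        = (∑ i ∈ range m, C (a (i+1)) * T ℝ i) + C (a 0) * T ℝ 1 := by
      rw [Finset.sum_range_succ']
      congr 1
      · refine Finset.sum_congr rfl fun i _ => ?_
        norm_num
      · norm_num [T_neg_one, T_one]
    rw [e1, e2, e3, down]
    ring

lemma d1 (q : ℝ[X]) : derivative (2 * X * q) = 2 * X * derivative q + 2 * q := by
  rw [derivative_mul, derivative_mul, derivative_X, derivative_ofNat]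
  ring

lemma dconst (c : ℝ[X]) (hc : derivative c = 0) (q : ℝ[X]) :
    derivative (c * q) = c * derivative q := by
  rw [derivative_mul, hc, zero_mul, zero_add]

lemma d2 (q : ℝ[X]) : derivative (derivative (2 * X * q)) =
    2 * X * derivative (derivative q) + 4 * derivative q := by
  rw [d1, derivative_add, d1, dconst 2 (by simp)]
  ring

lemma d3 (q : ℝ[X]) : derivative (derivative (derivative (2 * X * q))) =
    2 * X * derivative (derivative (derivative q)) + 6 * derivative (derivative q) := by
  rw [d2, derivative_add, d1, dconst 4 (by simp)]
  ring

lemma d4 (q : ℝ[X]) : derivative (derivative (derivative (derivative (2 * X * q)))) =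
    2 * X * derivative (derivative (derivative (derivative q)))
      + 8 * derivative (derivative (derivative q)) := by
  rw [d3, derivative_add, d1, dconst 6 (by simp)]
  ring

lemma g1_zero {i p : ℕ} (h : p ≤ i) : g1 i p = 0 := by rw [g1, if_neg]; omega
lemma g2_zero {i p : ℕ} (h : p ≤ i) : g2 i p = 0 := by rw [g2, if_neg]; omega
lemma g3_zero {i p : ℕ} (h : p ≤ i) : g3 i p = 0 := by rw [g3, if_neg]; omega
lemma g4_zero {i p : ℕ} (h : p ≤ i) : g4 i p = 0 := by rw [g4, if_neg]; omega

lemma key1 (p : ℕ) : derivative (T ℝ p) = ∑ i ∈ range (p+1), C (g1 i p) * T ℝ i := by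
  induction p using Nat.twoStepInduction with
  | zero => simp [T_zero, g1, bcoef]
  | one =>
    rw [show ((1:ℕ):ℤ) = 1 by norm_num, T_one, derivative_X]
    rw [Finset.sum_range_succ, Finset.sum_range_one]
    norm_num [g1, bcoef, T_zero, T_one]
  | more p ih1 ih2 =>
    rw [show (((p+2:ℕ)):ℤ) = (p:ℤ)+2 by push_cast; ring, T_add_two, derivative_sub, d1,
      show ((p:ℤ)+1) = ((p+1:ℕ):ℤ) by push_cast; ring, ih2, ih1,
      show range (p+1+1) = range (p+2) from rfl,
      sum_shift (fun i => g1 i (p+1)) (p+2) (g1_zero (by omega)) (g1_zero (by omega)),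
      show (2:ℝ[X]) * T ℝ ((p+1:ℕ):ℤ) = C 2 * T ℝ ((p+1:ℕ):ℤ) by rw [map_ofNat],
      ← sum_single 2 (p+1) (p+3) (by omega),
      sum_extend (fun i => g1 i p) (show p+1 ≤ p+3 by omega)
        (fun j hj _ => g1_zero (by omega)) |>.symm]
    rw [← Finset.sum_add_distrib, ← Finset.sum_sub_distrib]
    refine Finset.sum_congr rfl fun i _ => ?_
    rw [S1 p i]; simp only [C_sub, C_add]; ring

lemma const_mul_sum (c : ℝ) (a : ℕ → ℝ) (n : ℕ) :
    C c * ∑ i ∈ range n, C (a i) * T ℝ i = ∑ i ∈ range n, C (c * a i) * T ℝ i := by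
  rw [Finset.mul_sum]
  exact Finset.sum_congr rfl fun i _ => by rw [← mul_assoc, ← Polynomial.C_mul]

lemma key2 (p : ℕ) : derivative (derivative (T ℝ p)) =
    ∑ i ∈ range (p+1), C (g2 i p) * T ℝ i := by
  induction p using Nat.twoStepInduction with
  | zero => simp [T_zero, g2, bcoef]
  | one =>
    rw [show ((1:ℕ):ℤ) = 1 by norm_num, T_one, derivative_X]
    rw [Finset.sum_range_succ, Finset.sum_range_one]
    norm_num [g2, bcoef, T_zero, T_one]
  | more p ih1 ih2 =>
    rw [show (((p+2:ℕ)):ℤ) = (p:ℤ)+2 by push_cast; ring, T_add_two, derivative_sub,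
      derivative_sub, d2,
      show ((p:ℤ)+1) = ((p+1:ℕ):ℤ) by push_cast; ring, ih2, ih1, key1 (p+1),
      show range (p+1+1) = range (p+2) from rfl,
      sum_shift (fun i => g2 i (p+1)) (p+2) (g2_zero (by omega)) (g2_zero (by omega)),
      show (4:ℝ[X]) = C (4:ℝ) by rw [map_ofNat],
      const_mul_sum 4 (fun i => g1 i (p+1)) (p+2),
      sum_extend (fun i => 4 * g1 i (p+1)) (show p+2 ≤ p+3 by omega)
        (fun j hj _ => by simp [g1_zero (show p+1 ≤ j by omega)]) |>.symm,
      sum_extend (fun i => g2 i p) (show p+1 ≤ p+3 by omega)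
        (fun j hj _ => g2_zero (by omega)) |>.symm]
    rw [← Finset.sum_add_distrib, ← Finset.sum_sub_distrib]
    refine Finset.sum_congr rfl fun i _ => ?_
    rw [S2 p i]; simp only [C_sub, C_add]; ring

lemma key3 (p : ℕ) : derivative (derivative (derivative (T ℝ p))) =
    ∑ i ∈ range (p+1), C (g3 i p) * T ℝ i := by
  induction p using Nat.twoStepInduction with
  | zero => simp [T_zero, g3, bcoef]
  | one =>
    rw [show ((1:ℕ):ℤ) = 1 by norm_num, T_one, derivative_X]
    rw [Finset.sum_range_succ, Finset.sum_range_one]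
    norm_num [g3, bcoef, T_zero, T_one]
  | more p ih1 ih2 =>
    rw [show (((p+2:ℕ)):ℤ) = (p:ℤ)+2 by push_cast; ring, T_add_two, derivative_sub,
      derivative_sub, derivative_sub, d3,
      show ((p:ℤ)+1) = ((p+1:ℕ):ℤ) by push_cast; ring, ih2, ih1, key2 (p+1),
      show range (p+1+1) = range (p+2) from rfl,
      sum_shift (fun i => g3 i (p+1)) (p+2) (g3_zero (by omega)) (g3_zero (by omega)),
      show (6:ℝ[X]) = C (6:ℝ) by rw [map_ofNat],
      const_mul_sum 6 (fun i => g2 i (p+1)) (p+2),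
      sum_extend (fun i => 6 * g2 i (p+1)) (show p+2 ≤ p+3 by omega)
        (fun j hj _ => by simp [g2_zero (show p+1 ≤ j by omega)]) |>.symm,
      sum_extend (fun i => g3 i p) (show p+1 ≤ p+3 by omega)
        (fun j hj _ => g3_zero (by omega)) |>.symm]
    rw [← Finset.sum_add_distrib, ← Finset.sum_sub_distrib]
    refine Finset.sum_congr rfl fun i _ => ?_
    rw [S3 p i]; simp only [C_sub, C_add]; ring

lemma key4 (p : ℕ) : derivative (derivative (derivative (derivative (T ℝ p)))) =
    ∑ i ∈ range (p+1), C (g4 i p) * T ℝ i := by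
  induction p using Nat.twoStepInduction with
  | zero => simp [T_zero, g4, bcoef]
  | one =>
    rw [show ((1:ℕ):ℤ) = 1 by norm_num, T_one, derivative_X]
    rw [Finset.sum_range_succ, Finset.sum_range_one]
    norm_num [g4, bcoef, T_zero, T_one]
  | more p ih1 ih2 =>
    rw [show (((p+2:ℕ)):ℤ) = (p:ℤ)+2 by push_cast; ring, T_add_two, derivative_sub,
      derivative_sub, derivative_sub, derivative_sub, d4,
      show ((p:ℤ)+1) = ((p+1:ℕ):ℤ) by push_cast; ring, ih2, ih1, key3 (p+1),
      show range (p+1+1) = range (p+2) from rfl,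
      sum_shift (fun i => g4 i (p+1)) (p+2) (g4_zero (by omega)) (g4_zero (by omega)),
      show (8:ℝ[X]) = C (8:ℝ) by rw [map_ofNat],
      const_mul_sum 8 (fun i => g3 i (p+1)) (p+2),
      sum_extend (fun i => 8 * g3 i (p+1)) (show p+2 ≤ p+3 by omega)
        (fun j hj _ => by simp [g3_zero (show p+1 ≤ j by omega)]) |>.symm,
      sum_extend (fun i => g4 i p) (show p+1 ≤ p+3 by omega)
        (fun j hj _ => g4_zero (by omega)) |>.symm]
    rw [← Finset.sum_add_distrib, ← Finset.sum_sub_distrib]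
    refine Finset.sum_congr rfl fun i _ => ?_
    rw [S4 p i]; simp only [C_sub, C_add]; ring

/-- If `φ = ∑_{i=0}^M φᵢ Tᵢ`, then `φ'''' = ∑_{i=0}^M φᵢ⁽⁴⁾ Tᵢ` with
`φᵢ⁽⁴⁾ = (1/(24 bᵢ)) ∑_{p=i+4, p ≡ i (mod 2)}^M
  p (p²(p²-4)² - 3p⁴i² + 3p²i⁴ - i²(i²-4)²) φₚ`. -/
theorem chebyshev_fourth_derivative_coeffs (M : ℕ) (φc : ℕ → ℝ) :
    derivative (derivative (derivative (derivative
        (∑ i ∈ range (M + 1), C (φc i) * T ℝ i)))) =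
      ∑ i ∈ range (M + 1),
        C ((1 / (24 * bcoef i)) *
            ∑ p ∈ range (M + 1),
              if i + 4 ≤ p ∧ p % 2 = i % 2 then
                (p : ℝ) *
                  ((p : ℝ) ^ 2 * ((p : ℝ) ^ 2 - 4) ^ 2
                    - 3 * (p : ℝ) ^ 4 * (i : ℝ) ^ 2
                    + 3 * (p : ℝ) ^ 2 * (i : ℝ) ^ 4
                    - (i : ℝ) ^ 2 * ((i : ℝ) ^ 2 - 4) ^ 2) * φc p
              else 0) *
          T ℝ i := by
  have key4' : ∀ p, p ≤ M → derivative (derivative (derivative (derivative (T ℝ p)))) =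
      ∑ i ∈ range (M+1), C (g4 i p) * T ℝ i := fun p hp => by
    rw [key4 p, sum_extend (fun i => g4 i p) (show p+1 ≤ M+1 by omega)
      (fun j hj _ => g4_zero (by omega))]
  calc derivative (derivative (derivative (derivative
        (∑ p ∈ range (M + 1), C (φc p) * T ℝ p))))
      = ∑ p ∈ range (M + 1), C (φc p) *
          derivative (derivative (derivative (derivative (T ℝ p)))) := by
        simp only [derivative_sum, derivative_C_mul]
    _ = ∑ p ∈ range (M + 1), ∑ i ∈ range (M + 1), C (φc p * g4 i p) * T ℝ i := by
        refine Finset.sum_congr rfl fun p hp => ?_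
        rw [key4' p (by simpa using Nat.lt_succ_iff.1 (Finset.mem_range.1 hp)),
          const_mul_sum (φc p) (fun i => g4 i p) (M+1)]
    _ = ∑ i ∈ range (M + 1), ∑ p ∈ range (M + 1), C (φc p * g4 i p) * T ℝ i :=
        Finset.sum_comm
    _ = _ := by
        refine Finset.sum_congr rfl fun i _ => ?_
        rw [show (∑ p ∈ range (M+1), C (φc p * g4 i p) * T ℝ (i:ℤ))
            = (∑ p ∈ range (M+1), C (φc p * g4 i p)) * T ℝ (i:ℤ)
            from (Finset.sum_mul _ _ _).symm,
          ← map_sum Polynomial.C (fun p => φc p * g4 i p) (range (M+1))]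
        congr 2
        rw [Finset.mul_sum]
        refine Finset.sum_congr rfl fun p _ => ?_
        rw [g4]
        split_ifs with h
        · field_simp
        · simp
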